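/- Let r : ℝ → ℝ be bounded, continuously differentiable, strictly increasing with r'(s) > 0 for all s ≥ 0 and s·r(s) ≥ 0 for all s, let κ, κ_L, L, b > 0, let c₀ ≥ 0, let c solve κ·c'' = r(c), c(0) = c₀, c'(0) = 0 on [0,∞), and let w solve κ·w'' = r'(c)·w, w(0) = 1, w'(0) = 0 on [0,∞). Define M(z) := (L·b/κ_L + c'(z))·w'(z) − ((r(c(z)) − b)/κ)·w(z). Then M is strictly increasing on [0,∞); in particular, if r(c₀) ≤ b then M(z) > M(0) ≥ 0 for all z > 0. -/

import Mathlib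

open Set MeasureTheory intervalIntegral Filter

/-- `c` (with derivative `c'` and second derivative `c''`) solves the initial value
problem `κ·c'' = r(c)` on `[0,∞)` with `c(0) = c₀`, `c'(0) = 0`. -/
def SolvesIVP (κ : ℝ) (r : ℝ → ℝ) (c₀ : ℝ) (c c' c'' : ℝ → ℝ) : Prop :=
  (∀ z ∈ Ici (0:ℝ), HasDerivWithinAt c (c' z) (Ici (0:ℝ)) z) ∧
  (∀ z ∈ Ici (0:ℝ), HasDerivWithinAt c' (c'' z) (Ici (0:ℝ)) z) ∧
  ContinuousOn c'' (Ici (0:ℝ)) ∧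
  (∀ z ∈ Ici (0:ℝ), κ * c'' z = r (c z)) ∧
  c 0 = c₀ ∧ c' 0 = 0

theorem M_strictly_increasing
    (κ κL L b : ℝ) (hκ : 0 < κ) (hκL : 0 < κL) (hL : 0 < L) (hb : 0 < b)
    (r : ℝ → ℝ) (hrb : ∃ B : ℝ, ∀ s : ℝ, |r s| ≤ B)
    (hr : ContDiff ℝ 1 r) (hrmono : StrictMono r)
    (hr'pos : ∀ s : ℝ, 0 ≤ s → 0 < deriv r s)
    (hrsign : ∀ s : ℝ, 0 ≤ s * r s)
    (c₀ : ℝ) (hc₀ : 0 ≤ c₀)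
    (c c' c'' : ℝ → ℝ) (hc : SolvesIVP κ r c₀ c c' c'')
    (w w' w'' : ℝ → ℝ)
    (hw1 : ∀ z ∈ Ici (0:ℝ), HasDerivWithinAt w (w' z) (Ici (0:ℝ)) z)
    (hw2 : ∀ z ∈ Ici (0:ℝ), HasDerivWithinAt w' (w'' z) (Ici (0:ℝ)) z)
    (hw2c : ContinuousOn w'' (Ici (0:ℝ)))
    (hwode : ∀ z ∈ Ici (0:ℝ), κ * w'' z = deriv r (c z) * w z)
    (hw0 : w 0 = 1) (hw0' : w' 0 = 0)
    (M : ℝ → ℝ)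
    (hM : ∀ z : ℝ, M z = (L * b / κL + c' z) * w' z - ((r (c z) - b) / κ) * w z) :
    StrictMonoOn M (Ici (0:ℝ)) ∧
    (r c₀ ≤ b → 0 ≤ M 0 ∧ ∀ z > (0:ℝ), M 0 < M z) := by
  obtain ⟨hc1, hc2, hc2c, hcode, hcini, hcini'⟩ := hc
  set A : ℝ := L * b / κL with hA
  have hA0 : 0 < A := div_pos (mul_pos hL hb) hκL
  have hrdiff : ∀ s : ℝ, HasDerivAt r (deriv r s) s := fun s =>
    ((hr.differentiable one_ne_zero) s).hasDerivAt
  -- deriv r is nonnegative everywhere since r is strictly monotone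
  have hrd0 : ∀ s : ℝ, 0 ≤ deriv r s := by
    intro s
    have h := hasDerivAt_iff_tendsto_slope.1 (hrdiff s)
    refine ge_of_tendsto h ?_
    filter_upwards [self_mem_nhdsWithin] with y hy
    have hy' : y ≠ s := hy
    rw [slope_def_field, div_nonneg_iff]
    rcases lt_or_gt_of_ne hy' with h1 | h1
    · have : r y ≤ r s := (hrmono.le_iff_le).2 h1.le
      exact Or.inr ⟨by linarith, by linarith⟩
    · have : r s ≤ r y := (hrmono.le_iff_le).2 h1.le
      exact Or.inl ⟨by linarith, by linarith⟩
  have hw'cont : ContinuousOn w' (Ici (0:ℝ)) := fun z hz => (hw2 z hz).continuousWithinAt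
  have hwcont : ContinuousOn w (Ici (0:ℝ)) := fun z hz => (hw1 z hz).continuousWithinAt
  -- w is positive on [0, ∞)
  have hwpos : ∀ z ∈ Ici (0:ℝ), 0 < w z := by
    by_contra hcon
    push_neg at hcon
    obtain ⟨z₁, hz₁, hwz₁⟩ := hcon
    set Z : Set ℝ := Ici (0:ℝ) ∩ w ⁻¹' (Iic 0) with hZ
    have hZc : IsClosed Z :=
      hwcont.preimage_isClosed_of_isClosed isClosed_Ici isClosed_Iic
    have hZne : Z.Nonempty := ⟨z₁, hz₁, hwz₁⟩
    have hZbdd : BddBelow Z := ⟨0, fun z hz => hz.1⟩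
    set z₀ : ℝ := sInf Z with hz₀def
    have hz₀mem : z₀ ∈ Z := hZc.csInf_mem hZne hZbdd
    have hz₀pos : 0 < z₀ := by
      rcases (mem_Ici.1 hz₀mem.1).lt_or_eq with h | h
      · exact h
      · exfalso
        have h2 := hz₀mem.2
        rw [← h] at h2
        simp only [mem_preimage, mem_Iic, hw0] at h2
        linarith
    have hwmid : ∀ t : ℝ, 0 ≤ t → t < z₀ → 0 < w t := by
      intro t ht htz
      by_contra hwt
      push_neg at hwt
      have : t ∈ Z := ⟨ht, hwt⟩
      exact absurd (csInf_le hZbdd this) (not_le.2 htz)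
    have hsub : Icc (0:ℝ) z₀ ⊆ Ici 0 := Icc_subset_Ici_self
    -- w' monotone on [0, z₀]
    have hmono' : MonotoneOn w' (Icc (0:ℝ) z₀) := by
      apply monotoneOn_of_hasDerivWithinAt_nonneg (convex_Icc 0 z₀)
        (fun z hz => (hw'cont z (hsub hz)).mono hsub)
      · intro x hx
        rw [interior_Icc] at hx ⊢
        exact (hw2 x (le_of_lt hx.1)).mono (fun t ht => le_of_lt ht.1)
      · intro x hx
        rw [interior_Icc] at hx
        have hode := hwode x hx.1.le
        have hwx : 0 < w x := hwmid x hx.1.le hx.2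
        nlinarith [hrd0 (c x)]
    have hw'n : ∀ t ∈ Icc (0:ℝ) z₀, 0 ≤ w' t := by
      intro t ht
      have := hmono' ⟨le_rfl, hz₀pos.le⟩ ht ht.1
      rwa [hw0'] at this
    have hmonow : MonotoneOn w (Icc (0:ℝ) z₀) := by
      apply monotoneOn_of_hasDerivWithinAt_nonneg (convex_Icc 0 z₀)
        (fun z hz => (hwcont z (hsub hz)).mono hsub)
      · intro x hx
        rw [interior_Icc] at hx ⊢
        exact (hw1 x (le_of_lt hx.1)).mono (fun t ht => le_of_lt ht.1)
      · intro x hx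
        rw [interior_Icc] at hx
        exact hw'n x ⟨hx.1.le, hx.2.le⟩
    have h1 : (1:ℝ) ≤ w z₀ := by
      have := hmonow ⟨le_rfl, hz₀pos.le⟩ ⟨hz₀pos.le, le_rfl⟩ hz₀pos.le
      rwa [hw0] at this
    have := hz₀mem.2
    simp only [mem_preimage, mem_Iic] at this
    linarith
  -- w'' nonneg on [0,∞)
  have hw''n : ∀ z ∈ Ici (0:ℝ), 0 ≤ w'' z := by
    intro z hz
    have hode := hwode z hz
    nlinarith [hrd0 (c z), hwpos z hz]
  -- w' monotone on [0,∞), hence nonneg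
  have hw'mono : MonotoneOn w' (Ici (0:ℝ)) := by
    apply monotoneOn_of_hasDerivWithinAt_nonneg (convex_Ici 0) hw'cont
    · intro x hx
      rw [interior_Ici] at hx ⊢
      exact (hw2 x (Ioi_subset_Ici_self hx)).mono (fun t ht => Ioi_subset_Ici_self ht)
    · intro x hx
      rw [interior_Ici] at hx
      exact hw''n x (Ioi_subset_Ici_self hx)
  have hw'n : ∀ z ∈ Ici (0:ℝ), 0 ≤ w' z := by
    intro z hz
    have := hw'mono self_mem_Ici hz hz
    rwa [hw0'] at this
  -- w ≥ 1 on [0,∞)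
  have hwmono : MonotoneOn w (Ici (0:ℝ)) := by
    apply monotoneOn_of_hasDerivWithinAt_nonneg (convex_Ici 0) hwcont
    · intro x hx
      rw [interior_Ici] at hx ⊢
      exact (hw1 x (Ioi_subset_Ici_self hx)).mono (fun t ht => Ioi_subset_Ici_self ht)
    · intro x hx
      rw [interior_Ici] at hx
      exact hw'n x (Ioi_subset_Ici_self hx)
  -- w'' 0 > 0
  have hw''0pos : 0 < w'' 0 := by
    have hode := hwode 0 self_mem_Ici
    rw [hw0, hcini] at hode
    have := hr'pos c₀ hc₀
    nlinarith
  -- w' > 0 on (0,∞)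
  have hw'pos : ∀ z : ℝ, 0 < z → 0 < w' z := by
    have hev : ∀ᶠ t in nhdsWithin (0:ℝ) (Ici 0), 0 < w'' t :=
      (hw2c 0 self_mem_Ici).eventually (eventually_gt_nhds hw''0pos)
    obtain ⟨δ, hδpos, hδ⟩ := mem_nhdsGE_iff_exists_Icc_subset.1 hev
    have hstr : StrictMonoOn w' (Icc (0:ℝ) δ) := by
      apply strictMonoOn_of_hasDerivWithinAt_pos (convex_Icc 0 δ)
        (fun z hz => (hw'cont z hz.1).mono Icc_subset_Ici_self)
      · intro x hx
        rw [interior_Icc] at hx ⊢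
        exact (hw2 x (le_of_lt hx.1)).mono (fun t ht => le_of_lt ht.1)
      · intro x hx
        rw [interior_Icc] at hx
        exact hδ ⟨hx.1.le, hx.2.le⟩
    intro z hz
    set t := min δ z with ht
    have htpos : 0 < t := lt_min hδpos hz
    have h1 : w' 0 < w' t := hstr ⟨le_rfl, hδpos.le⟩ ⟨htpos.le, min_le_left _ _⟩ htpos
    have h2 : w' t ≤ w' z := hw'mono htpos.le hz.le (min_le_right _ _)
    rw [hw0'] at h1
    linarith
  -- The derivative of M
  set D : ℝ → ℝ := fun z => (b * w' z + A * (deriv r (c z) * w z)) / κ with hD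
  have hMD : ∀ z ∈ Ici (0:ℝ), HasDerivWithinAt M (D z) (Ici (0:ℝ)) z := by
    intro z hz
    have hrc : HasDerivWithinAt (fun z => r (c z)) (deriv r (c z) * c' z) (Ici (0:ℝ)) z :=
      (hrdiff (c z)).comp_hasDerivWithinAt z (hc1 z hz)
    have hE : HasDerivWithinAt (fun z => (A + c' z) * w' z)
        ((0 + c'' z) * w' z + (A + c' z) * w'' z) (Ici (0:ℝ)) z :=
      ((hasDerivWithinAt_const z _ A).add (hc2 z hz)).mul (hw2 z hz)
    have hF : HasDerivWithinAt (fun z => ((r (c z) - b) / κ) * w z)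
        ((deriv r (c z) * c' z) / κ * w z + ((r (c z) - b) / κ) * w' z) (Ici (0:ℝ)) z :=
      ((hrc.sub_const b).div_const κ).mul (hw1 z hz)
    have hMain : HasDerivWithinAt (fun z => (A + c' z) * w' z - ((r (c z) - b) / κ) * w z) _ _ _ := hE.sub hF
    have heq : (fun z => (A + c' z) * w' z - ((r (c z) - b) / κ) * w z) = M := by
      funext t; rw [hM t]
    rw [heq] at hMain
    convert hMain using 1
    have hκ' : κ ≠ 0 := ne_of_gt hκ
    have e1 : c'' z = r (c z) / κ := by
      rw [eq_div_iff hκ']; linarith [hcode z hz]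
    have e2 : w'' z = deriv r (c z) * w z / κ := by
      rw [eq_div_iff hκ']; linarith [hwode z hz]
    rw [hD, e1, e2]
    field_simp
    ring
  have hDpos : ∀ x ∈ interior (Ici (0:ℝ)), 0 < D x := by
    intro x hx
    rw [interior_Ici] at hx
    have h1 : 0 < b * w' x := mul_pos hb (hw'pos x hx)
    have h2 : 0 ≤ A * (deriv r (c x) * w x) :=
      mul_nonneg hA0.le (mul_nonneg (hrd0 _) (hwpos x (Ioi_subset_Ici_self hx)).le)
    exact div_pos (by linarith) hκ
  have hMcont : ContinuousOn M (Ici (0:ℝ)) := fun z hz => (hMD z hz).continuousWithinAt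
  have hMmono : StrictMonoOn M (Ici (0:ℝ)) := by
    apply strictMonoOn_of_hasDerivWithinAt_pos (convex_Ici 0) hMcont
    · intro x hx
      have hx' : x ∈ Ici (0:ℝ) := interior_subset hx
      exact (hMD x hx').mono interior_subset
    · exact hDpos
  refine ⟨hMmono, fun hrc₀ => ?_⟩
  have hM0 : M 0 = (b - r c₀) / κ := by
    rw [hM 0, hw0, hw0', hcini', hcini]
    ring
  constructor
  · rw [hM0]
    apply div_nonneg (by linarith) hκ.le
  · intro z hz
    exact hMmono self_mem_Ici hz.le hz
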